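/- Let R be a ring satisfying: for any x₁,…,x₅ ∈ R there exists x ∈ R with x − xᵢ a unit for all i. Then for any x ∈ R there exists y ∈ R such that 1 + y, 1 − y, 1 + (x + y), and 1 − (x + y) are all units of R. -/
import Mathlib

/-- If `R` satisfies the five-element avoidance condition, then for any `x ∈ R`
there exists `y ∈ R` such that `1+y`, `1-y`, `1+(x+y)` and `1-(x+y)` are units. -/
theorem exists_good_translate (R : Type*) [Ring R]
    (h : ∀ x₁ x₂ x₃ x₄ x₅ : R, ∃ x : R, IsUnit (x - x₁) ∧ IsUnit (x - x₂) ∧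
      IsUnit (x - x₃) ∧ IsUnit (x - x₄) ∧ IsUnit (x - x₅)) :
    ∀ x : R, ∃ y : R, IsUnit (1 + y) ∧ IsUnit (1 - y) ∧
      IsUnit (1 + (x + y)) ∧ IsUnit (1 - (x + y)) := by
  intro x
  obtain ⟨y, h1, h2, h3, h4, -⟩ := h (-1) 1 (-1 - x) (1 - x) 0
  refine ⟨y, ?_, ?_, ?_, ?_⟩
  · simpa [add_comm] using h1
  · have := h2.neg; simpa [neg_sub] using this
  · have : 1 + (x + y) = y - (-1 - x) := by abel
    rw [this]; exact h3
  · have : 1 - (x + y) = -(y - (1 - x)) := by abel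
    rw [this]; exact h4.neg
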